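/- Let 0 ≤ a < 4 and 0 ≤ j < 4. There exists x with 0 ≤ x < e/4 such that g^{4x} h^j + g^a ≡ 0 (mod pq) if and only if 4 divides (p-1)/2 - (q-1)/2 - j and 4 divides a + (q-1)/2; moreover, when these divisibility conditions hold, such x is unique (i.e., the solution is unique modulo e/4). -/

import Mathlib

lemma stmt8_unit_pow_eq {M : Type*} [Monoid M] (u : Mˣ) (m n : ℕ) :
    (u : M) ^ m = (u : M) ^ n ↔ m ≡ n [MOD orderOf (u : M)] := by
  rw [← Units.val_pow_eq_pow_val, ← Units.val_pow_eq_pow_val, orderOf_units]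
  exact ⟨fun hh => pow_eq_pow_iff_modEq.mp (Units.ext hh),
    fun hh => congrArg Units.val (pow_eq_pow_iff_modEq.mpr hh)⟩

lemma stmt8_eqn_iff {p : ℕ} [Fact p.Prime] (hpo : Odd p) (g : ZMod p)
    (hg : orderOf g = p - 1) (m n : ℕ) :
    g ^ m + g ^ n = 0 ↔ m ≡ n + (p - 1) / 2 [MOD p - 1] := by
  have hp2 : 2 ≤ p := (Fact.out : p.Prime).two_le
  have hpne2 : p ≠ 2 := by rintro rfl; exact (Nat.not_odd_iff_even.mpr even_two) hpo
  have hp3 : 3 ≤ p := by omega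
  have hev : 2 ∣ p - 1 := by
    obtain ⟨k, hk⟩ := hpo; omega
  have ht : (p - 1) / 2 + (p - 1) / 2 = p - 1 := by omega
  have hne1 : g ^ ((p - 1) / 2) ≠ 1 := by
    intro hh
    have hd := orderOf_dvd_iff_pow_eq_one.mpr hh
    rw [hg] at hd
    have := Nat.le_of_dvd (by omega) hd
    omega
  have hneg : g ^ ((p - 1) / 2) = -1 := by
    have h2 : g ^ ((p - 1) / 2) * g ^ ((p - 1) / 2) = 1 := by
      rw [← pow_add, ht, ← hg, pow_orderOf_eq_one]
    rcases mul_self_eq_one_iff.mp h2 with h1 | h1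
    · exact absurd h1 hne1
    · exact h1
  have hfin : IsOfFinOrder g := by
    rw [← orderOf_pos_iff, hg]; omega
  obtain ⟨u, hu⟩ := hfin.isUnit
  have heq : g ^ m + g ^ n = 0 ↔ g ^ m = g ^ (n + (p - 1) / 2) := by
    rw [pow_add, hneg, mul_neg_one, add_eq_zero_iff_eq_neg]
  rw [heq, ← hu, stmt8_unit_pow_eq, hu, hg]

lemma stmt8_crt_exists (P4 Q4 : ℕ) (hP : 0 < P4) (hQ : 0 < Q4)
    (hco : Nat.Coprime P4 Q4) (c₁ c₂ : ℤ) :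
    ∃ x : ℕ, x < P4 * Q4 ∧ (x : ℤ) ≡ c₁ [ZMOD (P4 : ℤ)] ∧ (x : ℤ) ≡ c₂ [ZMOD (Q4 : ℤ)] := by
  obtain ⟨k, hk1, hk2⟩ := Nat.chineseRemainder hco (c₁ % P4).toNat (c₂ % Q4).toNat
  refine ⟨k % (P4 * Q4), Nat.mod_lt _ (by positivity), ?_, ?_⟩
  · have h1 : k % (P4 * Q4) ≡ k [MOD P4] :=
      (Nat.mod_modEq k (P4 * Q4)).of_dvd (dvd_mul_right _ _)
    have h2 : ((c₁ % P4).toNat : ℤ) = c₁ % P4 :=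
      Int.toNat_of_nonneg (Int.emod_nonneg _ (by positivity))
    calc ((k % (P4 * Q4) : ℕ) : ℤ) ≡ (k : ℤ) [ZMOD (P4 : ℤ)] := Int.natCast_modEq_iff.mpr h1
      _ ≡ ((c₁ % P4).toNat : ℤ) [ZMOD (P4 : ℤ)] := Int.natCast_modEq_iff.mpr hk1
      _ = c₁ % P4 := h2
      _ ≡ c₁ [ZMOD (P4 : ℤ)] := Int.emod_emod_of_dvd _ dvd_rfl
  · have h1 : k % (P4 * Q4) ≡ k [MOD Q4] :=
      (Nat.mod_modEq k (P4 * Q4)).of_dvd (dvd_mul_left _ _)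
    have h2 : ((c₂ % Q4).toNat : ℤ) = c₂ % Q4 :=
      Int.toNat_of_nonneg (Int.emod_nonneg _ (by positivity))
    calc ((k % (P4 * Q4) : ℕ) : ℤ) ≡ (k : ℤ) [ZMOD (Q4 : ℤ)] := Int.natCast_modEq_iff.mpr h1
      _ ≡ ((c₂ % Q4).toNat : ℤ) [ZMOD (Q4 : ℤ)] := Int.natCast_modEq_iff.mpr hk2
      _ = c₂ % Q4 := h2
      _ ≡ c₂ [ZMOD (Q4 : ℤ)] := Int.emod_emod_of_dvd _ dvd_rfl

theorem stmt8
    (p q : ℕ) (hp : Nat.Prime p) (hq : Nat.Prime q) (hne : p ≠ q)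
    (hpo : Odd p) (hqo : Odd q)
    (hgcd : Nat.gcd (p - 1) (q - 1) = 4)
    (e : ℕ) (he : e = (p - 1) * (q - 1) / 4)
    (g h : ℕ)
    (hgp : orderOf (g : ZMod p) = p - 1)
    (hgq : orderOf (g : ZMod q) = q - 1)
    (hhp : (h : ZMod p) = (g : ZMod p))
    (hhq : (h : ZMod q) = 1)
    (D : ℕ → Finset (ZMod (p * q)))
    (hD : ∀ i, D i = (Finset.range (e / 4) ×ˢ Finset.range 4).image
        (fun sj => (g : ZMod (p * q)) ^ (4 * sj.1 + i) * (h : ZMod (p * q)) ^ sj.2))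
 :
    ∀ a : ℕ, a < 4 → ∀ j : ℕ, j < 4 →
      ((∃ x, x < e / 4 ∧
          (g : ZMod (p * q)) ^ (4 * x) * (h : ZMod (p * q)) ^ j + (g : ZMod (p * q)) ^ a = 0)
        ↔ ((4 : ℤ) ∣ ((((p - 1) / 2 : ℕ) : ℤ) - (((q - 1) / 2 : ℕ) : ℤ) - (j : ℤ)) ∧
            4 ∣ (a + (q - 1) / 2))) ∧
      (((4 : ℤ) ∣ ((((p - 1) / 2 : ℕ) : ℤ) - (((q - 1) / 2 : ℕ) : ℤ) - (j : ℤ)) ∧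
            4 ∣ (a + (q - 1) / 2)) →
        ∀ x₁ x₂ : ℕ, x₁ < e / 4 → x₂ < e / 4 →
          (g : ZMod (p * q)) ^ (4 * x₁) * (h : ZMod (p * q)) ^ j + (g : ZMod (p * q)) ^ a = 0 →
          (g : ZMod (p * q)) ^ (4 * x₂) * (h : ZMod (p * q)) ^ j + (g : ZMod (p * q)) ^ a = 0 →
          x₁ = x₂) := by
  intro a ha j hj
  haveI : Fact p.Prime := ⟨hp⟩
  haveI : Fact q.Prime := ⟨hq⟩
  haveI : NeZero (p * q) := ⟨Nat.mul_ne_zero hp.pos.ne' hq.pos.ne'⟩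
  have hcop : Nat.Coprime p q := (Nat.coprime_primes hp hq).mpr hne
  have h4p : 4 ∣ p - 1 := hgcd ▸ Nat.gcd_dvd_left _ _
  have h4q : 4 ∣ q - 1 := hgcd ▸ Nat.gcd_dvd_right _ _
  obtain ⟨P4, hP4⟩ := h4p
  obtain ⟨Q4, hQ4⟩ := h4q
  have hp2 : 2 ≤ p := hp.two_le
  have hq2 : 2 ≤ q := hq.two_le
  have hPpos : 0 < P4 := by omega
  have hQpos : 0 < Q4 := by omega
  have hco4 : Nat.Coprime P4 Q4 := by
    have hgm : Nat.gcd (4 * P4) (4 * Q4) = 4 * Nat.gcd P4 Q4 := Nat.gcd_mul_left _ _ _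
    rw [hP4, hQ4, hgm] at hgcd
    unfold Nat.Coprime
    omega
  have hef : e / 4 = P4 * Q4 := by
    have hM : (p - 1) * (q - 1) = 16 * (P4 * Q4) := by rw [hP4, hQ4]; ring
    rw [he, hM]
    omega
  -- key equivalence per x
  have key : ∀ x : ℕ, ((g : ZMod (p * q)) ^ (4 * x) * (h : ZMod (p * q)) ^ j
        + (g : ZMod (p * q)) ^ a = 0) ↔
      (4 * x + j ≡ a + (p - 1) / 2 [MOD p - 1] ∧ 4 * x ≡ a + (q - 1) / 2 [MOD q - 1]) := by
    intro x
    have hcast : (g : ZMod (p * q)) ^ (4 * x) * (h : ZMod (p * q)) ^ j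
        + (g : ZMod (p * q)) ^ a = ((g ^ (4 * x) * h ^ j + g ^ a : ℕ) : ZMod (p * q)) := by
      push_cast; ring
    rw [hcast, ZMod.natCast_eq_zero_iff]
    have hsplit : p * q ∣ g ^ (4 * x) * h ^ j + g ^ a ↔
        (p ∣ g ^ (4 * x) * h ^ j + g ^ a ∧ q ∣ g ^ (4 * x) * h ^ j + g ^ a) :=
      ⟨fun hh => ⟨(dvd_mul_right p q).trans hh, (dvd_mul_left q p).trans hh⟩,
       fun ⟨h1, h2⟩ => hcop.mul_dvd_of_dvd_of_dvd h1 h2⟩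
    rw [hsplit, ← ZMod.natCast_eq_zero_iff _ p, ← ZMod.natCast_eq_zero_iff _ q]
    have hep : ((g ^ (4 * x) * h ^ j + g ^ a : ℕ) : ZMod p)
        = (g : ZMod p) ^ (4 * x + j) + (g : ZMod p) ^ a := by
      push_cast
      rw [hhp, ← pow_add]
    have heq : ((g ^ (4 * x) * h ^ j + g ^ a : ℕ) : ZMod q)
        = (g : ZMod q) ^ (4 * x) + (g : ZMod q) ^ a := by
      push_cast
      rw [hhq, one_pow, mul_one]
    rw [hep, heq, stmt8_eqn_iff hpo _ hgp, stmt8_eqn_iff hqo _ hgq]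
  -- dvd reformulation
  have keyd : ∀ x : ℕ, ((g : ZMod (p * q)) ^ (4 * x) * (h : ZMod (p * q)) ^ j
        + (g : ZMod (p * q)) ^ a = 0) ↔
      (((p - 1 : ℕ) : ℤ) ∣ ((a : ℤ) + (((p - 1) / 2 : ℕ) : ℤ) - (4 * x + j)) ∧
       ((q - 1 : ℕ) : ℤ) ∣ ((a : ℤ) + (((q - 1) / 2 : ℕ) : ℤ) - 4 * x)) := by
    intro x
    rw [key x, Nat.modEq_iff_dvd, Nat.modEq_iff_dvd]
    have r1 : ((a + (p - 1) / 2 : ℕ) : ℤ) - ((4 * x + j : ℕ) : ℤ)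
        = (a : ℤ) + (((p - 1) / 2 : ℕ) : ℤ) - (4 * x + j) := by push_cast; ring
    have r2 : ((a + (q - 1) / 2 : ℕ) : ℤ) - ((4 * x : ℕ) : ℤ)
        = (a : ℤ) + (((q - 1) / 2 : ℕ) : ℤ) - 4 * x := by push_cast; ring
    rw [r1, r2]
  have hPm : ((p - 1 : ℕ) : ℤ) = 4 * (P4 : ℤ) := by
    rw [hP4]; push_cast; ring
  have hQm : ((q - 1 : ℕ) : ℤ) = 4 * (Q4 : ℤ) := by
    rw [hQ4]; push_cast; ring
  have hPh : (((p - 1) / 2 : ℕ) : ℤ) * 2 = ((p - 1 : ℕ) : ℤ) := by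
    have : (p - 1) / 2 * 2 = p - 1 := by omega
    exact_mod_cast congrArg (Nat.cast : ℕ → ℤ) this
  have hQh : (((q - 1) / 2 : ℕ) : ℤ) * 2 = ((q - 1 : ℕ) : ℤ) := by
    have : (q - 1) / 2 * 2 = q - 1 := by omega
    exact_mod_cast congrArg (Nat.cast : ℕ → ℤ) this
  have hcast2 : ((a + (q - 1) / 2 : ℕ) : ℤ) = (a : ℤ) + (((q - 1) / 2 : ℕ) : ℤ) := by push_cast; ring
  constructor
  · constructor
    · rintro ⟨x, hx, hxe⟩
      obtain ⟨k1, hk1⟩ := ((keyd x).mp hxe).1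
      obtain ⟨k2, hk2⟩ := ((keyd x).mp hxe).2
      rw [hPm] at hk1
      rw [hQm] at hk2
      have hk1' : (a : ℤ) + (((p - 1) / 2 : ℕ) : ℤ) - (4 * x + j) = 4 * ((P4 : ℤ) * k1) := by
        rw [hk1]; ring
      have hk2' : (a : ℤ) + (((q - 1) / 2 : ℕ) : ℤ) - 4 * x = 4 * ((Q4 : ℤ) * k2) := by
        rw [hk2]; ring
      constructor
      · generalize (P4 : ℤ) * k1 = u1 at hk1'
        generalize (Q4 : ℤ) * k2 = u2 at hk2'
        omega
      · generalize (Q4 : ℤ) * k2 = u2 at hk2'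
        omega
    · rintro ⟨hd1, hd2⟩
      -- build solution via CRT
      have hd2' : (4 : ℤ) ∣ ((a : ℤ) + (((q - 1) / 2 : ℕ) : ℤ)) := by
        obtain ⟨k, hk⟩ := hd2
        rw [← hcast2]
        exact ⟨(k : ℤ), by exact_mod_cast congrArg (Nat.cast : ℕ → ℤ) hk⟩
      have hd1' : (4 : ℤ) ∣ ((a : ℤ) + (((p - 1) / 2 : ℕ) : ℤ) - (j : ℤ)) := by
        obtain ⟨k, hk⟩ := hd1
        obtain ⟨k2, hk2⟩ := hd2'
        exact ⟨k + k2, by omega⟩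
      obtain ⟨c₁, hc₁⟩ := hd1'
      obtain ⟨c₂, hc₂⟩ := hd2'
      obtain ⟨x, hx, hm1, hm2⟩ := stmt8_crt_exists P4 Q4 hPpos hQpos hco4 c₁ c₂
      refine ⟨x, by rw [hef]; exact hx, (keyd x).mpr ⟨?_, ?_⟩⟩
      · obtain ⟨t, ht⟩ := (Int.modEq_iff_dvd.mp hm1)
        rw [hPm]
        refine ⟨t, ?_⟩
        calc (a : ℤ) + (((p - 1) / 2 : ℕ) : ℤ) - (4 * x + j) = 4 * (c₁ - (x : ℤ)) := by omega
          _ = 4 * ((P4 : ℤ) * t) := by rw [ht]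
          _ = 4 * (P4 : ℤ) * t := by ring
      · obtain ⟨t, ht⟩ := (Int.modEq_iff_dvd.mp hm2)
        rw [hQm]
        refine ⟨t, ?_⟩
        calc (a : ℤ) + (((q - 1) / 2 : ℕ) : ℤ) - 4 * x = 4 * (c₂ - (x : ℤ)) := by omega
          _ = 4 * ((Q4 : ℤ) * t) := by rw [ht]
          _ = 4 * (Q4 : ℤ) * t := by ring
  · rintro - x₁ x₂ hx₁ hx₂ he₁ he₂
    obtain ⟨d1, d2⟩ := (keyd x₁).mp he₁
    obtain ⟨d3, d4⟩ := (keyd x₂).mp he₂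
    rw [hPm] at d1 d3
    rw [hQm] at d2 d4
    have hP : (P4 : ℤ) ∣ ((x₁ : ℤ) - x₂) := by
      have hsub : (4 : ℤ) * P4 ∣ 4 * ((x₁ : ℤ) - x₂) := by
        have hd := dvd_sub d3 d1
        convert hd using 1
        rfl
        ring
      exact (mul_dvd_mul_iff_left (by norm_num : (4:ℤ) ≠ 0)).mp hsub
    have hQ : (Q4 : ℤ) ∣ ((x₁ : ℤ) - x₂) := by
      have hsub : (4 : ℤ) * Q4 ∣ 4 * ((x₁ : ℤ) - x₂) := by
        have hd := dvd_sub d4 d2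
        convert hd using 1
        rfl
        ring
      exact (mul_dvd_mul_iff_left (by norm_num : (4:ℤ) ≠ 0)).mp hsub
    have hco' : IsCoprime (P4 : ℤ) (Q4 : ℤ) := Nat.isCoprime_iff_coprime.mpr hco4
    have hmul : ((P4 * Q4 : ℕ) : ℤ) ∣ (x₁ : ℤ) - x₂ := by
      push_cast
      exact hco'.mul_dvd hP hQ
    rw [hef] at hx₁ hx₂
    have hz : (x₁ : ℤ) - x₂ = 0 :=
      Int.eq_zero_of_dvd_of_natAbs_lt_natAbs hmul (by omega)
    omega
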